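/- Let F have characteristic zero and let R be a monomial Rota–Baxter operator of weight zero on F₀[X] (polynomials without constant term in variables X). Suppose R(∏_{i∈J} x_i^{a_i}) = α·∏_{i∈J} x_i^{b_i} with α ≠ 0, a_i ≥ b_i for all i in a finite index set J, and a_k > b_k for some k. Then this leads to a contradiction; i.e., such a strict degree decrease componentwise on a monomial (onto a monomial dividing it properly) is impossible. -/
import Mathlib


open MvPolynomial

/-- A monomial Rota–Baxter operator of weight zero on `F₀[X]`
(char F = 0) cannot map a monomial `∏ x_i^{a_i}` onto a nonzero multiple of a
monomial `∏ x_i^{b_i}` with `b_i ≤ a_i` for all `i` and `b_k < a_k` for some `k`. -/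
theorem stmt14 {F σ : Type*} [Field F] [CharZero F]
    (R : MvPolynomial σ F →ₗ[F] MvPolynomial σ F)
    -- R maps the augmentation ideal into itself
    (hInv : ∀ f : MvPolynomial σ F, coeff 0 f = 0 → coeff 0 (R f) = 0)
    -- R is monomial on the augmentation ideal
    (hMon : ∀ d : σ →₀ ℕ, d ≠ 0 → ∃ (c : F) (e : σ →₀ ℕ),
      R (monomial d (1 : F)) = c • monomial e (1 : F))
    -- Rota–Baxter identity of weight zero on the augmentation ideal
    (hRB : ∀ f g : MvPolynomial σ F, coeff 0 f = 0 → coeff 0 g = 0 →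
      R f * R g = R (R f * g + f * R g))
    (a b : σ →₀ ℕ) (ha : a ≠ 0)
    (hba : ∀ i : σ, b i ≤ a i) (hlt : ∃ k : σ, b k < a k)
    (α : F) (hα : α ≠ 0)
    (hab : R (monomial a (1 : F)) = α • monomial b (1 : F)) :
    False := by
  classical
  set w : σ →₀ ℕ := a - b with hw_def
  have hwb : w + b = a := by
    ext i
    simp [hw_def, Finsupp.tsub_apply, Nat.sub_add_cancel (hba i)]
  have hw : w ≠ 0 := by
    obtain ⟨k, hk⟩ := hlt
    intro h
    have : w k = 0 := by rw [h]; rfl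
    rw [hw_def] at this
    simp [Finsupp.tsub_apply] at this
    omega
  have hcw : coeff 0 (monomial w (1:F)) = 0 := by
    simp [coeff_monomial, hw]
  have hca : coeff 0 (monomial a (1:F)) = 0 := by
    simp [coeff_monomial, ha]
  obtain ⟨β, u, hβu⟩ := hMon w hw
  have hkey := hRB (monomial w 1) (monomial a 1) hcw hca
  rw [hβu, hab] at hkey
  have hwba : monomial w (1:F) * monomial b 1 = monomial a 1 := by
    rw [monomial_mul, one_mul, hwb]
  rw [smul_mul_smul_comm, monomial_mul, one_mul, smul_mul_assoc, monomial_mul,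
    one_mul, mul_smul_comm, hwba, map_add, map_smul, map_smul, hab, smul_smul] at hkey
  -- hkey : (β * α) • monomial (u + a) ... check
  by_cases hβ : β = 0
  · rw [hβ] at hkey
    simp only [zero_mul, zero_smul, zero_add] at hkey
    have := congrArg (coeff b) hkey.symm
    simp [coeff_smul, coeff_monomial] at this
    exact hα this
  · have hu : u ≠ 0 := by
      intro hu0
      have hIu := hInv (monomial w 1) hcw
      rw [hβu, hu0] at hIu
      simp [coeff_smul, coeff_monomial] at hIu
      exact hβ hIu
    have hua : u + a ≠ 0 := by
      intro h
      apply ha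
      ext i
      have := DFunLike.congr_fun h i
      simp [Finsupp.add_apply] at this
      simp [this.2]
    obtain ⟨γ, e, hγe⟩ := hMon (u + a) hua
    rw [hγe, smul_smul] at hkey
    -- hkey : (β * α) • monomial (u + b) 1 = (β * γ) • monomial e 1 + (α * α) • monomial b 1
    have hub : u + b ≠ b := by
      intro h
      exact hu (by simpa using congrArg (fun f => f - b) h)
    have h1 := congrArg (coeff (u + b)) hkey
    have h2 := congrArg (coeff b) hkey
    simp [coeff_smul, coeff_monomial, hub, hu] at h1 h2
    -- h1 : β * α = if e = u + b then β * γ else 0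
    -- h2 : 0 = (if e = b then β * γ else 0) + α * α
    by_cases he : e = u + b
    · rw [he] at h2
      rw [if_neg hub, zero_add] at h2
      exact hα (mul_self_eq_zero.mp h2.symm)
    · rw [if_neg he] at h1
      exact hβ ((mul_eq_zero.mp h1).resolve_right hα)
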